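/- arXiv:2106.12928 — 2 statements merged into one kernel-verified Lean document; each statement's English description precedes it below -/
import Mathlib

section
/- Let $A$ be a finite nonempty set, $T > 0$, $r : A \to \mathbb{R}$, and let $p : A \to (0,1)$ be a probability distribution with full support satisfying, for all $i \in A$, $r_i - \sum_j p_j r_j - T(\ln p_i - \sum_j p_j \ln p_j) = 0$. Then $p_i = \exp(r_i/T) / \sum_{j \in A} \exp(r_j/T)$ for all $i \in A$. -/
theorem interior_fixed_point_is_softmax {A : Type*} [Fintype A] [Nonempty A]
    (T : ℝ) (hT : 0 < T) (r : A → ℝ) (p : A → ℝ)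
    (hp : ∀ i, p i ∈ Set.Ioo (0:ℝ) 1) (hps : ∑ i, p i = 1)
    (hfix : ∀ i, r i - (∑ j, p j * r j)
      - T * (Real.log (p i) - ∑ j, p j * Real.log (p j)) = 0) :
    ∀ i, p i = Real.exp (r i / T) / ∑ j, Real.exp (r j / T) := by
  set c : ℝ := (-(∑ j, p j * r j) + T * ∑ j, p j * Real.log (p j)) / T with hc
  have key : ∀ i, p i = Real.exp (r i / T) * Real.exp c := by
    intro i
    have hpi := (hp i).1
    have hfi := hfix i
    have hlog : Real.log (p i) = r i / T + c := by
      field_simp [hc]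
      nlinarith [hfix i, show T * c = -(∑ j, p j * r j) + T * ∑ j, p j * Real.log (p j) by
        rw [hc, mul_div_assoc']; exact mul_div_cancel_left₀ _ hT.ne']
    rw [← Real.exp_add, ← hlog, Real.exp_log hpi]
  have hsum : (∑ j, Real.exp (r j / T)) * Real.exp c = 1 := by
    rw [Finset.sum_mul, ← hps]
    exact (Finset.sum_congr rfl fun j _ => (key j).symm)
  have hS : (∑ j, Real.exp (r j / T)) ≠ 0 := by
    have : (0:ℝ) < ∑ j, Real.exp (r j / T) :=
      Finset.sum_pos (fun j _ => Real.exp_pos _) Finset.univ_nonempty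
    linarith
  intro i
  rw [key i, eq_div_iff hS]
  nlinarith [hsum, Real.exp_pos (r i / T)]
end

section
/- Let $A$ be a finite nonempty set and let $p, x : A \to (0,1)$ be probability vectors with full support. Let $r, r^p : A \to \mathbb{R}$ and $T > 0$, and suppose $p$ satisfies $\sum_i (z_i - p_i)(r^p_i - T \ln p_i) = 0$ for all probability vectors $z$. If $x(t)$ evolves by $\dot{x}_i = x_i [ r_i - \sum_j x_j r_j - T(\ln x_i - \sum_j x_j \ln x_j)]$, then $\frac{d}{dt} D_{KL}(p \| x(t)) = \sum_i (x_i - p_i)(r_i - r^p_i) - T\left[ D_{KL}(p \| x) + D_{KL}(x \| p) \right]$. -/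
theorem KL_time_derivative_at_QRE {A : Type*} [Fintype A] [Nonempty A]
    (T : ℝ) (hT : 0 < T) (p : A → ℝ)
    (hp : ∀ i, p i ∈ Set.Ioo (0:ℝ) 1) (hps : ∑ i, p i = 1)
    (r rp : A → ℝ)
    (horth : ∀ z : A → ℝ, (∀ i, 0 ≤ z i) → (∑ i, z i = 1) →
      ∑ i, (z i - p i) * (rp i - T * Real.log (p i)) = 0)
    (x : ℝ → A → ℝ)
    (hxmem : ∀ t i, x t i ∈ Set.Ioo (0:ℝ) 1) (hxs : ∀ t, ∑ i, x t i = 1)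
    (hdiff : ∀ i, Differentiable ℝ fun t => x t i)
    (hdyn : ∀ t i, deriv (fun s => x s i) t
      = x t i * (r i - (∑ j, x t j * r j)
          - T * (Real.log (x t i) - ∑ j, x t j * Real.log (x t j)))) :
    ∀ t, deriv (fun s => ∑ i, p i * Real.log (p i / x s i)) t
      = (∑ i, (x t i - p i) * (r i - rp i))
        - T * ((∑ i, p i * Real.log (p i / x t i))
              + ∑ i, x t i * Real.log (x t i / p i)) := by
  intro t
  have hxpos : ∀ s i, 0 < x s i := fun s i => (hxmem s i).1
  have hppos : ∀ i, 0 < p i := fun i => (hp i).1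
  set a := ∑ j, x t j * r j with ha
  set b := ∑ j, x t j * Real.log (x t j) with hb
  -- derivative of each coordinate
  have hx : ∀ i, HasDerivAt (fun s => x s i)
      (x t i * (r i - a - T * (Real.log (x t i) - b))) t := by
    intro i
    have h := ((hdiff i) t).hasDerivAt
    rwa [hdyn t i] at h
  have hterm : ∀ i, HasDerivAt (fun s => p i * Real.log (p i) - p i * Real.log (x s i))
      (-(p i * (r i - a - T * (Real.log (x t i) - b)))) t := by
    intro i
    have hlog : HasDerivAt (fun s => Real.log (x s i))
        ((x t i * (r i - a - T * (Real.log (x t i) - b))) / (x t i)) t :=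
      (hx i).log (ne_of_gt (hxpos t i))
    have h2 := ((hlog.const_mul (p i)).const_sub (p i * Real.log (p i)))
    rw [mul_div_cancel_left₀ _ (ne_of_gt (hxpos t i))] at h2
    exact h2
  have hsum : HasDerivAt (fun s => ∑ i, (p i * Real.log (p i) - p i * Real.log (x s i)))
      (∑ i, -(p i * (r i - a - T * (Real.log (x t i) - b)))) t :=
    HasDerivAt.fun_sum (fun i _ => hterm i)
  have hfun : (fun s => ∑ i, p i * Real.log (p i / x s i))
      = fun s => ∑ i, (p i * Real.log (p i) - p i * Real.log (x s i)) := by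
    funext s
    refine Finset.sum_congr rfl fun i _ => ?_
    rw [Real.log_div (ne_of_gt (hppos i)) (ne_of_gt (hxpos s i)), mul_sub]
  rw [hfun, hsum.deriv]
  -- expand all sums into linear combinations of basic sums
  have e1 : ∑ i, -(p i * (r i - a - T * (Real.log (x t i) - b)))
      = -(∑ i, p i * r i) + (∑ i, p i) * a
        + T * (∑ i, p i * Real.log (x t i)) - T * ((∑ i, p i) * b) := by
    rw [Finset.sum_mul, Finset.sum_mul, Finset.mul_sum, ← Finset.sum_neg_distrib,
      ← Finset.sum_add_distrib, ← Finset.sum_add_distrib]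
    rw [Finset.mul_sum, ← Finset.sum_sub_distrib]
    exact Finset.sum_congr rfl fun i _ => by ring
  have e2 : ∑ i, (x t i - p i) * (r i - rp i)
      = (∑ i, x t i * r i) - (∑ i, x t i * rp i)
        - (∑ i, p i * r i) + ∑ i, p i * rp i := by
    rw [← Finset.sum_sub_distrib, ← Finset.sum_sub_distrib, ← Finset.sum_add_distrib]
    exact Finset.sum_congr rfl fun i _ => by ring
  have e3 : ∑ i, p i * Real.log (p i / x t i)
      = (∑ i, p i * Real.log (p i)) - ∑ i, p i * Real.log (x t i) := by
    rw [← Finset.sum_sub_distrib]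
    refine Finset.sum_congr rfl fun i _ => ?_
    rw [Real.log_div (ne_of_gt (hppos i)) (ne_of_gt (hxpos t i)), mul_sub]
  have e4 : ∑ i, x t i * Real.log (x t i / p i)
      = (∑ i, x t i * Real.log (x t i)) - ∑ i, x t i * Real.log (p i) := by
    rw [← Finset.sum_sub_distrib]
    refine Finset.sum_congr rfl fun i _ => ?_
    rw [Real.log_div (ne_of_gt (hxpos t i)) (ne_of_gt (hppos i)), mul_sub]
  have H := horth (x t) (fun i => le_of_lt (hxpos t i)) (hxs t)
  have H2 : (∑ i, x t i * rp i) - T * (∑ i, x t i * Real.log (p i))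
      - (∑ i, p i * rp i) + T * (∑ i, p i * Real.log (p i)) = 0 := by
    rw [← H, Finset.mul_sum, Finset.mul_sum, ← Finset.sum_sub_distrib,
      ← Finset.sum_sub_distrib, ← Finset.sum_add_distrib]
    exact Finset.sum_congr rfl fun i _ => by ring
  rw [e1, e2, e3, e4, hps, hb]
  linear_combination H2
end
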